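/- Let L be any fragment of LTL(Prop) and let 𝒫, 𝒩 be finite sets of words in W(Prop). If there is a (𝒫,𝒩)-separating L-formula, then there is one of size at most 2^n, where n := Σ_{w ∈ 𝒫∪𝒩} ‖w‖. -/

import Mathlib

open scoped Classical

/-- Formulas of linear temporal logic `LTL(Prop)`:
`φ ::= p | ¬φ | φ∨φ | φ∧φ | Xφ | Fφ | Gφ | φUφ`. -/
inductive LTL (P : Type) : Type
  | atom : P → LTL P
  | not : LTL P → LTL P
  | or : LTL P → LTL P → LTL P
  | and : LTL P → LTL P → LTL P
  | next : LTL P → LTL P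
  | fut : LTL P → LTL P
  | glob : LTL P → LTL P
  | untl : LTL P → LTL P → LTL P

/-- Satisfaction of an `LTL` formula on a finite word over `2^P`
(a list of sets of propositions). -/
def satFin {P : Type} : LTL P → List (Set P) → Prop
  | .atom p, w => p ∈ w.getD 0 ∅
  | .not φ, w => ¬ satFin φ w
  | .or φ ψ, w => satFin φ w ∨ satFin ψ w
  | .and φ ψ, w => satFin φ w ∧ satFin ψ w
  | .next φ, w => 2 ≤ w.length ∧ satFin φ w.tail
  | .fut φ, w => ∃ j < w.length, satFin φ (w.drop j)
  | .glob φ, w => ∀ j < w.length, satFin φ (w.drop j)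
  | .untl φ ψ, w => ∃ j < w.length, satFin ψ (w.drop j) ∧ ∀ k < j, satFin φ (w.drop k)

/-- Satisfaction of an `LTL` formula on an infinite word over `2^P`. -/
def satInf {P : Type} : LTL P → (ℕ → Set P) → Prop
  | .atom p, w => p ∈ w 0
  | .not φ, w => ¬ satInf φ w
  | .or φ ψ, w => satInf φ w ∨ satInf ψ w
  | .and φ ψ, w => satInf φ w ∧ satInf ψ w
  | .next φ, w => satInf φ (fun i => w (i + 1))
  | .fut φ, w => ∃ j, satInf φ (fun i => w (i + j))
  | .glob φ, w => ∀ j, satInf φ (fun i => w (i + j))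
  | .untl φ ψ, w => ∃ j, satInf ψ (fun i => w (i + j)) ∧ ∀ k < j, satInf φ (fun i => w (i + k))

/-- A model of `W(Prop)`: either a non-empty finite word `u` (when `v = []`) or
the ultimately periodic infinite word `u·v^ω` (when `v ≠ []`). -/
structure UPWord (P : Type) where
  u : List (Set P)
  v : List (Set P)
  ne : u ≠ [] ∨ v ≠ []

namespace UPWord

variable {P : Type}

/-- The letter of the infinite word `u·v^ω` at position `i`. -/
def letter (w : UPWord P) (i : ℕ) : Set P :=
  if i < w.u.length then w.u.getD i ∅
  else w.v.getD ((i - w.u.length) % w.v.length) ∅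

/-- Satisfaction of an `LTL` formula on a word of `W(Prop)`. -/
def sat (w : UPWord P) (φ : LTL P) : Prop :=
  if w.v = [] then satFin φ w.u else satInf φ w.letter

/-- `‖w‖`, the size of (the representation of) a word of `W(Prop)`. -/
def norm (w : UPWord P) : ℕ := w.u.length + w.v.length

end UPWord

/-- A fragment of `LTL(Prop)`: a subset of the operators
(atomic propositions, `¬`, `∨`, `∧`, `X`, `F`, `G`, `U`). -/
structure LTLFragment (P : Type) where
  atoms : Set P
  hasNot : Prop
  hasOr : Prop
  hasAnd : Prop
  hasNext : Prop
  hasFut : Prop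
  hasGlob : Prop
  hasUntil : Prop

/-- A formula belongs to the fragment if it is built using only its operators. -/
def LTLFragment.Mem {P : Type} (F : LTLFragment P) : LTL P → Prop
  | .atom p => p ∈ F.atoms
  | .not φ => F.hasNot ∧ F.Mem φ
  | .or φ ψ => F.hasOr ∧ F.Mem φ ∧ F.Mem ψ
  | .and φ ψ => F.hasAnd ∧ F.Mem φ ∧ F.Mem ψ
  | .next φ => F.hasNext ∧ F.Mem φ
  | .fut φ => F.hasFut ∧ F.Mem φ
  | .glob φ => F.hasGlob ∧ F.Mem φ
  | .untl φ ψ => F.hasUntil ∧ F.Mem φ ∧ F.Mem ψ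

/-- The set of subformulas of an `LTL` formula. -/
def LTLSub {P : Type} : LTL P → Set (LTL P)
  | .atom p => {.atom p}
  | .not φ => insert (.not φ) (LTLSub φ)
  | .or φ ψ => insert (.or φ ψ) (LTLSub φ ∪ LTLSub ψ)
  | .and φ ψ => insert (.and φ ψ) (LTLSub φ ∪ LTLSub ψ)
  | .next φ => insert (.next φ) (LTLSub φ)
  | .fut φ => insert (.fut φ) (LTLSub φ)
  | .glob φ => insert (.glob φ) (LTLSub φ)
  | .untl φ ψ => insert (.untl φ ψ) (LTLSub φ ∪ LTLSub ψ)

/-- The (syntax-DAG) size of an `LTL` formula: its number of distinct subformulas. -/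
noncomputable def LTLsz {P : Type} (φ : LTL P) : ℕ := (LTLSub φ).ncard
section Aux
variable {P : Type}

/-- Tree size of a formula. -/
def LTLts : LTL P → ℕ
  | .atom _ => 1
  | .not φ => LTLts φ + 1
  | .or φ ψ => LTLts φ + LTLts ψ + 1
  | .and φ ψ => LTLts φ + LTLts ψ + 1
  | .next φ => LTLts φ + 1
  | .fut φ => LTLts φ + 1
  | .glob φ => LTLts φ + 1
  | .untl φ ψ => LTLts φ + LTLts ψ + 1

lemma self_mem_LTLSub (φ : LTL P) : φ ∈ LTLSub φ := by
  cases φ <;> simp [LTLSub]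

lemma LTLSub_trans : ∀ {φ ψ : LTL P}, ψ ∈ LTLSub φ → LTLSub ψ ⊆ LTLSub φ := by
  intro φ
  induction φ with
  | atom p => intro ψ h; simp only [LTLSub, Set.mem_singleton_iff] at h; subst h; rfl
  | not χ ih =>
    intro ψ h
    rcases (by simpa [LTLSub] using h : ψ = _ ∨ ψ ∈ LTLSub χ) with rfl | h
    · rfl
    · exact (ih h).trans (Set.subset_insert _ _)
  | next χ ih =>
    intro ψ h
    rcases (by simpa [LTLSub] using h : ψ = _ ∨ ψ ∈ LTLSub χ) with rfl | h
    · rfl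
    · exact (ih h).trans (Set.subset_insert _ _)
  | fut χ ih =>
    intro ψ h
    rcases (by simpa [LTLSub] using h : ψ = _ ∨ ψ ∈ LTLSub χ) with rfl | h
    · rfl
    · exact (ih h).trans (Set.subset_insert _ _)
  | glob χ ih =>
    intro ψ h
    rcases (by simpa [LTLSub] using h : ψ = _ ∨ ψ ∈ LTLSub χ) with rfl | h
    · rfl
    · exact (ih h).trans (Set.subset_insert _ _)
  | or χ₁ χ₂ ih₁ ih₂ =>
    intro ψ h
    rcases (by simpa [LTLSub] using h : ψ = _ ∨ ψ ∈ LTLSub χ₁ ∨ ψ ∈ LTLSub χ₂) with rfl | h | h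
    · rfl
    · exact (ih₁ h).trans ((Set.subset_union_left).trans (Set.subset_insert _ _))
    · exact (ih₂ h).trans ((Set.subset_union_right).trans (Set.subset_insert _ _))
  | and χ₁ χ₂ ih₁ ih₂ =>
    intro ψ h
    rcases (by simpa [LTLSub] using h : ψ = _ ∨ ψ ∈ LTLSub χ₁ ∨ ψ ∈ LTLSub χ₂) with rfl | h | h
    · rfl
    · exact (ih₁ h).trans ((Set.subset_union_left).trans (Set.subset_insert _ _))
    · exact (ih₂ h).trans ((Set.subset_union_right).trans (Set.subset_insert _ _))
  | untl χ₁ χ₂ ih₁ ih₂ =>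
    intro ψ h
    rcases (by simpa [LTLSub] using h : ψ = _ ∨ ψ ∈ LTLSub χ₁ ∨ ψ ∈ LTLSub χ₂) with rfl | h | h
    · rfl
    · exact (ih₁ h).trans ((Set.subset_union_left).trans (Set.subset_insert _ _))
    · exact (ih₂ h).trans ((Set.subset_union_right).trans (Set.subset_insert _ _))

lemma LTLts_of_mem : ∀ {φ ψ : LTL P}, ψ ∈ LTLSub φ → ψ = φ ∨ LTLts ψ < LTLts φ := by
  intro φ
  induction φ with
  | atom p => intro ψ h; simp only [LTLSub, Set.mem_singleton_iff] at h; exact Or.inl h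
  | not χ ih =>
    intro ψ h
    rcases (by simpa [LTLSub] using h : ψ = _ ∨ ψ ∈ LTLSub χ) with rfl | h
    · exact Or.inl rfl
    · right; rcases ih h with rfl | h' <;> simp [LTLts] <;> omega
  | next χ ih =>
    intro ψ h
    rcases (by simpa [LTLSub] using h : ψ = _ ∨ ψ ∈ LTLSub χ) with rfl | h
    · exact Or.inl rfl
    · right; rcases ih h with rfl | h' <;> simp [LTLts] <;> omega
  | fut χ ih =>
    intro ψ h
    rcases (by simpa [LTLSub] using h : ψ = _ ∨ ψ ∈ LTLSub χ) with rfl | h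
    · exact Or.inl rfl
    · right; rcases ih h with rfl | h' <;> simp [LTLts] <;> omega
  | glob χ ih =>
    intro ψ h
    rcases (by simpa [LTLSub] using h : ψ = _ ∨ ψ ∈ LTLSub χ) with rfl | h
    · exact Or.inl rfl
    · right; rcases ih h with rfl | h' <;> simp [LTLts] <;> omega
  | or χ₁ χ₂ ih₁ ih₂ =>
    intro ψ h
    rcases (by simpa [LTLSub] using h : ψ = _ ∨ ψ ∈ LTLSub χ₁ ∨ ψ ∈ LTLSub χ₂) with rfl | h | h
    · exact Or.inl rfl
    · right; rcases ih₁ h with rfl | h' <;> simp [LTLts] <;> omega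
    · right; rcases ih₂ h with rfl | h' <;> simp [LTLts] <;> omega
  | and χ₁ χ₂ ih₁ ih₂ =>
    intro ψ h
    rcases (by simpa [LTLSub] using h : ψ = _ ∨ ψ ∈ LTLSub χ₁ ∨ ψ ∈ LTLSub χ₂) with rfl | h | h
    · exact Or.inl rfl
    · right; rcases ih₁ h with rfl | h' <;> simp [LTLts] <;> omega
    · right; rcases ih₂ h with rfl | h' <;> simp [LTLts] <;> omega
  | untl χ₁ χ₂ ih₁ ih₂ =>
    intro ψ h
    rcases (by simpa [LTLSub] using h : ψ = _ ∨ ψ ∈ LTLSub χ₁ ∨ ψ ∈ LTLSub χ₂) with rfl | h | h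
    · exact Or.inl rfl
    · right; rcases ih₁ h with rfl | h' <;> simp [LTLts] <;> omega
    · right; rcases ih₂ h with rfl | h' <;> simp [LTLts] <;> omega

lemma LTLts_le_of_mem {φ ψ : LTL P} (h : ψ ∈ LTLSub φ) : LTLts ψ ≤ LTLts φ := by
  rcases LTLts_of_mem h with rfl | h' <;> omega

lemma LTLSub_finite (φ : LTL P) : (LTLSub φ).Finite := by
  induction φ with
  | atom p => exact Set.finite_singleton _
  | not χ ih => exact ih.insert _
  | next χ ih => exact ih.insert _
  | fut χ ih => exact ih.insert _
  | glob χ ih => exact ih.insert _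
  | or χ₁ χ₂ ih₁ ih₂ => exact (ih₁.union ih₂).insert _
  | and χ₁ χ₂ ih₁ ih₂ => exact (ih₁.union ih₂).insert _
  | untl χ₁ χ₂ ih₁ ih₂ => exact (ih₁.union ih₂).insert _

lemma Mem_of_sub {F : LTLFragment P} : ∀ {φ ψ : LTL P}, F.Mem φ → ψ ∈ LTLSub φ → F.Mem ψ := by
  intro φ
  induction φ with
  | atom p => intro ψ hm h; simp only [LTLSub, Set.mem_singleton_iff] at h; subst h; exact hm
  | not χ ih =>
    intro ψ hm h
    rcases (by simpa [LTLSub] using h : ψ = _ ∨ ψ ∈ LTLSub χ) with rfl | h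
    · exact hm
    · exact ih hm.2 h
  | next χ ih =>
    intro ψ hm h
    rcases (by simpa [LTLSub] using h : ψ = _ ∨ ψ ∈ LTLSub χ) with rfl | h
    · exact hm
    · exact ih hm.2 h
  | fut χ ih =>
    intro ψ hm h
    rcases (by simpa [LTLSub] using h : ψ = _ ∨ ψ ∈ LTLSub χ) with rfl | h
    · exact hm
    · exact ih hm.2 h
  | glob χ ih =>
    intro ψ hm h
    rcases (by simpa [LTLSub] using h : ψ = _ ∨ ψ ∈ LTLSub χ) with rfl | h
    · exact hm
    · exact ih hm.2 h
  | or χ₁ χ₂ ih₁ ih₂ =>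
    intro ψ hm h
    rcases (by simpa [LTLSub] using h : ψ = _ ∨ ψ ∈ LTLSub χ₁ ∨ ψ ∈ LTLSub χ₂) with rfl | h | h
    · exact hm
    · exact ih₁ hm.2.1 h
    · exact ih₂ hm.2.2 h
  | and χ₁ χ₂ ih₁ ih₂ =>
    intro ψ hm h
    rcases (by simpa [LTLSub] using h : ψ = _ ∨ ψ ∈ LTLSub χ₁ ∨ ψ ∈ LTLSub χ₂) with rfl | h | h
    · exact hm
    · exact ih₁ hm.2.1 h
    · exact ih₂ hm.2.2 h
  | untl χ₁ χ₂ ih₁ ih₂ =>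
    intro ψ hm h
    rcases (by simpa [LTLSub] using h : ψ = _ ∨ ψ ∈ LTLSub χ₁ ∨ ψ ∈ LTLSub χ₂) with rfl | h | h
    · exact hm
    · exact ih₁ hm.2.1 h
    · exact ih₂ hm.2.2 h

end Aux
section Rep
variable {P : Type}

noncomputable def LTLpost (a b x : LTL P) : LTL P := if x = b then a else x

/-- Replace (bottom-up) every occurrence of `b` by `a`. -/
noncomputable def LTLrep (a b : LTL P) : LTL P → LTL P
  | .atom p => LTLpost a b (.atom p)
  | .not φ => LTLpost a b (.not (LTLrep a b φ))
  | .or φ ψ => LTLpost a b (.or (LTLrep a b φ) (LTLrep a b ψ))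
  | .and φ ψ => LTLpost a b (.and (LTLrep a b φ) (LTLrep a b ψ))
  | .next φ => LTLpost a b (.next (LTLrep a b φ))
  | .fut φ => LTLpost a b (.fut (LTLrep a b φ))
  | .glob φ => LTLpost a b (.glob (LTLrep a b φ))
  | .untl φ ψ => LTLpost a b (.untl (LTLrep a b φ) (LTLrep a b ψ))

lemma LTLpost_eq (a b x : LTL P) (h : x ≠ b) : LTLpost a b x = x := if_neg h
lemma LTLpost_eq' (a b : LTL P) : LTLpost a b b = a := if_pos rfl

lemma LTLrep_eq_self {a b : LTL P} : ∀ {χ : LTL P}, b ∉ LTLSub χ → LTLrep a b χ = χ := by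
  intro χ
  induction χ with
  | atom p =>
    intro h
    exact LTLpost_eq _ _ _ fun e => h (e ▸ self_mem_LTLSub _)
  | not χ ih =>
    intro h
    have hc : b ∉ LTLSub χ := fun hh => h (by simp [LTLSub, hh])
    rw [LTLrep, ih hc]; exact LTLpost_eq _ _ _ fun e => h (e ▸ self_mem_LTLSub _)
  | next χ ih =>
    intro h
    have hc : b ∉ LTLSub χ := fun hh => h (by simp [LTLSub, hh])
    rw [LTLrep, ih hc]; exact LTLpost_eq _ _ _ fun e => h (e ▸ self_mem_LTLSub _)
  | fut χ ih =>
    intro h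
    have hc : b ∉ LTLSub χ := fun hh => h (by simp [LTLSub, hh])
    rw [LTLrep, ih hc]; exact LTLpost_eq _ _ _ fun e => h (e ▸ self_mem_LTLSub _)
  | glob χ ih =>
    intro h
    have hc : b ∉ LTLSub χ := fun hh => h (by simp [LTLSub, hh])
    rw [LTLrep, ih hc]; exact LTLpost_eq _ _ _ fun e => h (e ▸ self_mem_LTLSub _)
  | or χ₁ χ₂ ih₁ ih₂ =>
    intro h
    have hc₁ : b ∉ LTLSub χ₁ := fun hh => h (by simp [LTLSub, hh])
    have hc₂ : b ∉ LTLSub χ₂ := fun hh => h (by simp [LTLSub, hh])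
    rw [LTLrep, ih₁ hc₁, ih₂ hc₂]; exact LTLpost_eq _ _ _ fun e => h (e ▸ self_mem_LTLSub _)
  | and χ₁ χ₂ ih₁ ih₂ =>
    intro h
    have hc₁ : b ∉ LTLSub χ₁ := fun hh => h (by simp [LTLSub, hh])
    have hc₂ : b ∉ LTLSub χ₂ := fun hh => h (by simp [LTLSub, hh])
    rw [LTLrep, ih₁ hc₁, ih₂ hc₂]; exact LTLpost_eq _ _ _ fun e => h (e ▸ self_mem_LTLSub _)
  | untl χ₁ χ₂ ih₁ ih₂ =>
    intro h
    have hc₁ : b ∉ LTLSub χ₁ := fun hh => h (by simp [LTLSub, hh])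
    have hc₂ : b ∉ LTLSub χ₂ := fun hh => h (by simp [LTLSub, hh])
    rw [LTLrep, ih₁ hc₁, ih₂ hc₂]; exact LTLpost_eq _ _ _ fun e => h (e ▸ self_mem_LTLSub _)

lemma not_mem_of_ts_lt {b χ : LTL P} (h : LTLts χ < LTLts b) : b ∉ LTLSub χ :=
  fun hh => absurd (LTLts_le_of_mem hh) (by omega)

lemma LTLrep_self (a b : LTL P) : LTLrep a b b = a := by
  cases b with
  | atom p => rw [LTLrep, LTLpost_eq']
  | not χ => rw [LTLrep, LTLrep_eq_self (not_mem_of_ts_lt (by simp [LTLts])), LTLpost_eq']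
  | next χ => rw [LTLrep, LTLrep_eq_self (not_mem_of_ts_lt (by simp [LTLts])), LTLpost_eq']
  | fut χ => rw [LTLrep, LTLrep_eq_self (not_mem_of_ts_lt (by simp [LTLts])), LTLpost_eq']
  | glob χ => rw [LTLrep, LTLrep_eq_self (not_mem_of_ts_lt (by simp [LTLts])), LTLpost_eq']
  | or χ₁ χ₂ =>
    rw [LTLrep, LTLrep_eq_self (not_mem_of_ts_lt (by simp [LTLts])),
      LTLrep_eq_self (not_mem_of_ts_lt (by simp [LTLts])), LTLpost_eq']
  | and χ₁ χ₂ =>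
    rw [LTLrep, LTLrep_eq_self (not_mem_of_ts_lt (by simp [LTLts])),
      LTLrep_eq_self (not_mem_of_ts_lt (by simp [LTLts])), LTLpost_eq']
  | untl χ₁ χ₂ =>
    rw [LTLrep, LTLrep_eq_self (not_mem_of_ts_lt (by simp [LTLts])),
      LTLrep_eq_self (not_mem_of_ts_lt (by simp [LTLts])), LTLpost_eq']

lemma Mem_LTLpost {F : LTLFragment P} {a b x : LTL P} (ha : F.Mem a) (hx : F.Mem x) :
    F.Mem (LTLpost a b x) := by
  rw [LTLpost]; split
  · exact ha
  · exact hx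

lemma Mem_LTLrep {F : LTLFragment P} {a b : LTL P} (ha : F.Mem a) :
    ∀ {χ : LTL P}, F.Mem χ → F.Mem (LTLrep a b χ) := by
  intro χ
  induction χ with
  | atom p => intro hm; exact Mem_LTLpost ha hm
  | not χ ih => intro hm; exact Mem_LTLpost ha ⟨hm.1, ih hm.2⟩
  | next χ ih => intro hm; exact Mem_LTLpost ha ⟨hm.1, ih hm.2⟩
  | fut χ ih => intro hm; exact Mem_LTLpost ha ⟨hm.1, ih hm.2⟩
  | glob χ ih => intro hm; exact Mem_LTLpost ha ⟨hm.1, ih hm.2⟩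
  | or χ₁ χ₂ ih₁ ih₂ => intro hm; exact Mem_LTLpost ha ⟨hm.1, ih₁ hm.2.1, ih₂ hm.2.2⟩
  | and χ₁ χ₂ ih₁ ih₂ => intro hm; exact Mem_LTLpost ha ⟨hm.1, ih₁ hm.2.1, ih₂ hm.2.2⟩
  | untl χ₁ χ₂ ih₁ ih₂ => intro hm; exact Mem_LTLpost ha ⟨hm.1, ih₁ hm.2.1, ih₂ hm.2.2⟩

lemma LTLSub_LTLpost (a b x : LTL P) :
    LTLSub (LTLpost a b x) ⊆ LTLSub x ∪ LTLSub a := by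
  rw [LTLpost]; split
  · exact Set.subset_union_right
  · exact Set.subset_union_left

lemma LTLSub_LTLrep_subset (a b : LTL P) :
    ∀ χ : LTL P, LTLSub (LTLrep a b χ) ⊆ LTLrep a b '' LTLSub χ ∪ LTLSub a := by
  have key : ∀ χ x : LTL P, LTLrep a b χ = LTLpost a b x →
      (LTLrep a b χ = x → LTLSub x ⊆ LTLrep a b '' LTLSub χ ∪ LTLSub a) →
      LTLSub (LTLrep a b χ) ⊆ LTLrep a b '' LTLSub χ ∪ LTLSub a := by
    intro χ x hx hsub
    rw [hx, LTLpost]; split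
    · exact fun τ hτ => Or.inr hτ
    · next h => exact hsub (hx.trans (if_neg h))
  intro χ
  induction χ with
  | atom p =>
    refine key _ (.atom p) rfl fun hrep => ?_
    intro τ hτ
    simp only [LTLSub, Set.mem_singleton_iff] at hτ; subst hτ
    exact Or.inl ⟨.atom p, self_mem_LTLSub _, hrep⟩
  | not χ ih =>
    refine key _ _ rfl fun hrep => ?_
    intro τ hτ
    rcases (by simpa [LTLSub] using hτ : τ = _ ∨ τ ∈ LTLSub (LTLrep a b χ)) with rfl | hτ
    · exact Or.inl ⟨.not χ, self_mem_LTLSub _, hrep⟩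
    · rcases ih hτ with ⟨σ, hσ, rfl⟩ | hτ'
      · exact Or.inl ⟨σ, by simp [LTLSub, hσ], rfl⟩
      · exact Or.inr hτ'
  | next χ ih =>
    refine key _ _ rfl fun hrep => ?_
    intro τ hτ
    rcases (by simpa [LTLSub] using hτ : τ = _ ∨ τ ∈ LTLSub (LTLrep a b χ)) with rfl | hτ
    · exact Or.inl ⟨.next χ, self_mem_LTLSub _, hrep⟩
    · rcases ih hτ with ⟨σ, hσ, rfl⟩ | hτ'
      · exact Or.inl ⟨σ, by simp [LTLSub, hσ], rfl⟩
      · exact Or.inr hτ'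
  | fut χ ih =>
    refine key _ _ rfl fun hrep => ?_
    intro τ hτ
    rcases (by simpa [LTLSub] using hτ : τ = _ ∨ τ ∈ LTLSub (LTLrep a b χ)) with rfl | hτ
    · exact Or.inl ⟨.fut χ, self_mem_LTLSub _, hrep⟩
    · rcases ih hτ with ⟨σ, hσ, rfl⟩ | hτ'
      · exact Or.inl ⟨σ, by simp [LTLSub, hσ], rfl⟩
      · exact Or.inr hτ'
  | glob χ ih =>
    refine key _ _ rfl fun hrep => ?_
    intro τ hτ
    rcases (by simpa [LTLSub] using hτ : τ = _ ∨ τ ∈ LTLSub (LTLrep a b χ)) with rfl | hτ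
    · exact Or.inl ⟨.glob χ, self_mem_LTLSub _, hrep⟩
    · rcases ih hτ with ⟨σ, hσ, rfl⟩ | hτ'
      · exact Or.inl ⟨σ, by simp [LTLSub, hσ], rfl⟩
      · exact Or.inr hτ'
  | or χ₁ χ₂ ih₁ ih₂ =>
    refine key _ _ rfl fun hrep => ?_
    intro τ hτ
    rcases (by simpa [LTLSub] using hτ :
        τ = _ ∨ τ ∈ LTLSub (LTLrep a b χ₁) ∨ τ ∈ LTLSub (LTLrep a b χ₂)) with rfl | hτ | hτ
    · exact Or.inl ⟨.or χ₁ χ₂, self_mem_LTLSub _, hrep⟩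
    · rcases ih₁ hτ with ⟨σ, hσ, rfl⟩ | hτ'
      · exact Or.inl ⟨σ, by simp [LTLSub, hσ], rfl⟩
      · exact Or.inr hτ'
    · rcases ih₂ hτ with ⟨σ, hσ, rfl⟩ | hτ'
      · exact Or.inl ⟨σ, by simp [LTLSub, hσ], rfl⟩
      · exact Or.inr hτ'
  | and χ₁ χ₂ ih₁ ih₂ =>
    refine key _ _ rfl fun hrep => ?_
    intro τ hτ
    rcases (by simpa [LTLSub] using hτ :
        τ = _ ∨ τ ∈ LTLSub (LTLrep a b χ₁) ∨ τ ∈ LTLSub (LTLrep a b χ₂)) with rfl | hτ | hτ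
    · exact Or.inl ⟨.and χ₁ χ₂, self_mem_LTLSub _, hrep⟩
    · rcases ih₁ hτ with ⟨σ, hσ, rfl⟩ | hτ'
      · exact Or.inl ⟨σ, by simp [LTLSub, hσ], rfl⟩
      · exact Or.inr hτ'
    · rcases ih₂ hτ with ⟨σ, hσ, rfl⟩ | hτ'
      · exact Or.inl ⟨σ, by simp [LTLSub, hσ], rfl⟩
      · exact Or.inr hτ'
  | untl χ₁ χ₂ ih₁ ih₂ =>
    refine key _ _ rfl fun hrep => ?_
    intro τ hτ
    rcases (by simpa [LTLSub] using hτ :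
        τ = _ ∨ τ ∈ LTLSub (LTLrep a b χ₁) ∨ τ ∈ LTLSub (LTLrep a b χ₂)) with rfl | hτ | hτ
    · exact Or.inl ⟨.untl χ₁ χ₂, self_mem_LTLSub _, hrep⟩
    · rcases ih₁ hτ with ⟨σ, hσ, rfl⟩ | hτ'
      · exact Or.inl ⟨σ, by simp [LTLSub, hσ], rfl⟩
      · exact Or.inr hτ'
    · rcases ih₂ hτ with ⟨σ, hσ, rfl⟩ | hτ'
      · exact Or.inl ⟨σ, by simp [LTLSub, hσ], rfl⟩
      · exact Or.inr hτ'

end Rep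
section Sem
variable {P : Type}

lemma post_iff_fin {a b x χ : LTL P} {w : List (Set P)} (hab : satFin a w ↔ satFin b w)
    (hx : satFin x w ↔ satFin χ w) : satFin (LTLpost a b x) w ↔ satFin χ w := by
  rw [LTLpost]; split
  · next h => exact hab.trans (h ▸ hx)
  · exact hx

lemma post_iff_inf {a b x χ : LTL P} {f : ℕ → Set P} (hab : satInf a f ↔ satInf b f)
    (hx : satInf x f ↔ satInf χ f) : satInf (LTLpost a b x) f ↔ satInf χ f := by
  rw [LTLpost]; split
  · next h => exact hab.trans (h ▸ hx)
  · exact hx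

lemma satFin_LTLrep (a b : LTL P) (u : List (Set P))
    (hab : ∀ j, j < u.length → (satFin a (u.drop j) ↔ satFin b (u.drop j))) :
    ∀ (χ : LTL P) (j : ℕ), j < u.length →
      (satFin (LTLrep a b χ) (u.drop j) ↔ satFin χ (u.drop j)) := by
  intro χ
  induction χ with
  | atom p => intro j hj; rw [LTLrep]; exact post_iff_fin (hab j hj) Iff.rfl
  | not χ ih =>
    intro j hj; rw [LTLrep]
    refine post_iff_fin (hab j hj) ?_
    simp only [satFin]; exact not_congr (ih j hj)
  | or χ₁ χ₂ ih₁ ih₂ =>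
    intro j hj; rw [LTLrep]
    refine post_iff_fin (hab j hj) ?_
    simp only [satFin]; exact or_congr (ih₁ j hj) (ih₂ j hj)
  | and χ₁ χ₂ ih₁ ih₂ =>
    intro j hj; rw [LTLrep]
    refine post_iff_fin (hab j hj) ?_
    simp only [satFin]; exact and_congr (ih₁ j hj) (ih₂ j hj)
  | next χ ih =>
    intro j hj; rw [LTLrep]
    refine post_iff_fin (hab j hj) ?_
    simp only [satFin, List.tail_drop]
    refine and_congr_right fun h2 => ?_
    refine ih (j + 1) ?_
    rw [List.length_drop] at h2; omega
  | fut χ ih =>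
    intro j hj; rw [LTLrep]
    refine post_iff_fin (hab j hj) ?_
    simp only [satFin, List.drop_drop]
    refine exists_congr fun k => and_congr_right fun hk => ?_
    refine ih (j + k) ?_
    rw [List.length_drop] at hk; omega
  | glob χ ih =>
    intro j hj; rw [LTLrep]
    refine post_iff_fin (hab j hj) ?_
    simp only [satFin, List.drop_drop]
    refine forall_congr' fun k => imp_congr_right fun hk => ?_
    refine ih (j + k) ?_
    rw [List.length_drop] at hk; omega
  | untl χ₁ χ₂ ih₁ ih₂ =>
    intro j hj; rw [LTLrep]
    refine post_iff_fin (hab j hj) ?_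
    simp only [satFin, List.drop_drop]
    refine exists_congr fun k => and_congr_right fun hk => ?_
    rw [List.length_drop] at hk
    refine and_congr (ih₂ (j + k) (by omega)) ?_
    refine forall_congr' fun m => imp_congr_right fun hm => ?_
    exact ih₁ (j + m) (by omega)

lemma satInf_LTLrep (a b : LTL P) (f : ℕ → Set P)
    (hab : ∀ j, satInf a (fun i => f (i + j)) ↔ satInf b (fun i => f (i + j))) :
    ∀ (χ : LTL P) (j : ℕ),
      satInf (LTLrep a b χ) (fun i => f (i + j)) ↔ satInf χ (fun i => f (i + j)) := by
  intro χ
  induction χ with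
  | atom p => intro j; rw [LTLrep]; exact post_iff_inf (hab j) Iff.rfl
  | not χ ih =>
    intro j; rw [LTLrep]
    refine post_iff_inf (hab j) ?_
    simp only [satInf]; exact not_congr (ih j)
  | or χ₁ χ₂ ih₁ ih₂ =>
    intro j; rw [LTLrep]
    refine post_iff_inf (hab j) ?_
    simp only [satInf]; exact or_congr (ih₁ j) (ih₂ j)
  | and χ₁ χ₂ ih₁ ih₂ =>
    intro j; rw [LTLrep]
    refine post_iff_inf (hab j) ?_
    simp only [satInf]; exact and_congr (ih₁ j) (ih₂ j)
  | next χ ih =>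
    intro j; rw [LTLrep]
    refine post_iff_inf (hab j) ?_
    simp only [satInf, Nat.add_assoc]
    exact ih (1 + j)
  | fut χ ih =>
    intro j; rw [LTLrep]
    refine post_iff_inf (hab j) ?_
    simp only [satInf, Nat.add_assoc]
    exact exists_congr fun k => ih (k + j)
  | glob χ ih =>
    intro j; rw [LTLrep]
    refine post_iff_inf (hab j) ?_
    simp only [satInf, Nat.add_assoc]
    exact forall_congr' fun k => ih (k + j)
  | untl χ₁ χ₂ ih₁ ih₂ =>
    intro j; rw [LTLrep]
    refine post_iff_inf (hab j) ?_
    simp only [satInf, Nat.add_assoc]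
    exact exists_congr fun k => and_congr (ih₂ (k + j))
      (forall_congr' fun m => imp_congr_right fun _ => ih₁ (m + j))

lemma letter_shift (w : UPWord P) (hv : w.v ≠ []) (j : ℕ) :
    ∃ j' < w.norm, (fun i => w.letter (i + j)) = fun i => w.letter (i + j') := by
  have hvpos : 0 < w.v.length := List.length_pos_iff.2 hv
  by_cases hj : j < w.u.length
  · exact ⟨j, by simp only [UPWord.norm]; omega, rfl⟩
  · push_neg at hj
    have hmod : (j - w.u.length) % w.v.length < w.v.length := Nat.mod_lt _ hvpos
    refine ⟨w.u.length + (j - w.u.length) % w.v.length,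
      by simp only [UPWord.norm]; omega, funext fun i => ?_⟩
    set m := j - w.u.length with hm
    have h1 : i + j = (i + m) + w.u.length := by omega
    have h2 : i + (w.u.length + m % w.v.length) = (i + m % w.v.length) + w.u.length := by omega
    rw [h1, h2]
    unfold UPWord.letter
    rw [if_neg (by omega), if_neg (by omega)]
    congr 1
    simp only [Nat.add_sub_cancel]
    conv_lhs => rw [← Nat.mod_add_div m w.v.length, ← Nat.add_assoc]
    rw [Nat.add_mul_mod_self_left]

/-- Truth of `χ` at the `j`-th suffix of the word `w`. -/
def fpSat (w : UPWord P) (χ : LTL P) (j : ℕ) : Prop :=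
  if w.v = [] then satFin χ (w.u.drop j) else satInf χ (fun i => w.letter (i + j))

lemma sat_LTLrep (w : UPWord P) (a b φ : LTL P)
    (h : ∀ j < w.norm, (fpSat w a j ↔ fpSat w b j)) :
    w.sat (LTLrep a b φ) ↔ w.sat φ := by
  by_cases hv : w.v = []
  · have hu : w.u ≠ [] := by
      rcases w.ne with h' | h'
      · exact h'
      · exact absurd hv h'
    have hab : ∀ j, j < w.u.length → (satFin a (w.u.drop j) ↔ satFin b (w.u.drop j)) := by
      intro j hj
      have := h j (by simp only [UPWord.norm]; omega)
      simpa [fpSat, hv] using this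
    have h0 : 0 < w.u.length := List.length_pos_iff.2 hu
    have := satFin_LTLrep a b w.u hab φ 0 h0
    simpa [UPWord.sat, hv] using this
  · have hab : ∀ j, satInf a (fun i => w.letter (i + j)) ↔ satInf b (fun i => w.letter (i + j)) := by
      intro j
      obtain ⟨j', hj', he⟩ := letter_shift w hv j
      rw [he]
      simpa [fpSat, hv] using h j' hj'
    have := satInf_LTLrep a b w.letter hab φ 0
    simpa [UPWord.sat, hv] using this

lemma LTLsz_LTLrep_lt (a b φ : LTL P) (ha : a ∈ LTLSub φ) (hb : b ∈ LTLSub φ)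
    (hne : a ≠ b) (hba : b ∉ LTLSub a) : LTLsz (LTLrep a b φ) < LTLsz φ := by
  have hfin := LTLSub_finite φ
  have haux : ∀ σ ∈ LTLSub a, LTLrep a b σ = σ ∧ σ ∈ LTLSub φ \ {b} := by
    intro σ hσ
    have hbσ : b ∉ LTLSub σ := fun hh => hba (LTLSub_trans hσ hh)
    refine ⟨LTLrep_eq_self hbσ, LTLSub_trans ha hσ, ?_⟩
    intro e
    rw [Set.mem_singleton_iff] at e; subst e
    exact hba hσ
  have hsub : LTLSub (LTLrep a b φ) ⊆ LTLrep a b '' (LTLSub φ \ {b}) := by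
    intro τ hτ
    rcases LTLSub_LTLrep_subset a b φ hτ with ⟨σ, hσ, rfl⟩ | hτ'
    · by_cases hσb : σ = b
      · subst hσb
        rw [LTLrep_self]
        obtain ⟨he, hm⟩ := haux a (self_mem_LTLSub a)
        exact ⟨a, hm, he⟩
      · exact ⟨σ, ⟨hσ, by simpa using hσb⟩, rfl⟩
    · obtain ⟨he, hm⟩ := haux τ hτ'
      exact ⟨τ, hm, he⟩
  show (LTLSub (LTLrep a b φ)).ncard < (LTLSub φ).ncard
  calc (LTLSub (LTLrep a b φ)).ncard
      ≤ (LTLrep a b '' (LTLSub φ \ {b})).ncard :=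
        Set.ncard_le_ncard hsub (hfin.diff.image _)
    _ ≤ (LTLSub φ \ {b}).ncard := Set.ncard_image_le hfin.diff
    _ < (LTLSub φ).ncard := Set.ncard_diff_singleton_lt_of_mem hb hfin

end Sem

/-- **Corollary.** For any fragment of `LTL(Prop)` and any sample `(Pos, Neg)` of
words of `W(Prop)`: if some fragment formula separates the sample, then one of
size at most `2^n` does, where `n = Σ_{w ∈ Pos ∪ Neg} ‖w‖`. -/
theorem ltl_separating_size (P : Type) [Finite P] (hP : Nonempty P)
    (F : LTLFragment P) (Pos Neg : Finset (UPWord P)) :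
    (∃ φ : LTL P, F.Mem φ ∧
        (∀ w ∈ Pos, w.sat φ) ∧ (∀ w ∈ Neg, ¬ w.sat φ)) →
    ∃ φ : LTL P, F.Mem φ ∧
        (∀ w ∈ Pos, w.sat φ) ∧ (∀ w ∈ Neg, ¬ w.sat φ) ∧
        LTLsz φ ≤ 2 ^ (∑ w ∈ Pos ∪ Neg, w.norm) := by
  rintro ⟨φ₀, hmem₀, hpos₀, hneg₀⟩
  set n := ∑ w ∈ Pos ∪ Neg, w.norm with hn
  -- the finite "footprint" space
  let T := (w : ↥(Pos ∪ Neg)) → Fin (w.1.norm) → Bool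
  let g : LTL P → T := fun χ w j => decide (fpSat w.1 χ j.1)
  have hT : Fintype.card T = 2 ^ n := by
    rw [Fintype.card_pi]
    have : ∀ w : ↥(Pos ∪ Neg), Fintype.card (Fin (w.1.norm) → Bool) = 2 ^ w.1.norm := by
      intro w; simp [Fintype.card_fun]
    rw [Finset.prod_congr rfl fun w _ => this w]
    rw [Finset.prod_pow_eq_pow_sum, hn, ← Finset.sum_coe_sort (Pos ∪ Neg) UPWord.norm]
  suffices H : ∀ N (φ : LTL P), LTLsz φ ≤ N → F.Mem φ →
      (∀ w ∈ Pos, w.sat φ) → (∀ w ∈ Neg, ¬ w.sat φ) →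
      ∃ ψ : LTL P, F.Mem ψ ∧ (∀ w ∈ Pos, w.sat ψ) ∧ (∀ w ∈ Neg, ¬ w.sat ψ) ∧ LTLsz ψ ≤ 2 ^ n by
    exact H (LTLsz φ₀) φ₀ le_rfl hmem₀ hpos₀ hneg₀
  intro N
  induction N with
  | zero =>
    intro φ hsz hmem hpos hneg
    refine ⟨φ, hmem, hpos, hneg, ?_⟩
    omega
  | succ N ih =>
    intro φ hsz hmem hpos hneg
    by_cases hle : LTLsz φ ≤ 2 ^ n
    · exact ⟨φ, hmem, hpos, hneg, hle⟩
    · push_neg at hle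
      -- pigeonhole on the subformulas of φ
      have hfin := LTLSub_finite φ
      have hScard : Fintype.card T < hfin.toFinset.card := by
        rw [hT, ← Set.ncard_eq_toFinset_card _ hfin]
        exact hle
      obtain ⟨a, haS, b, hbS, hne, hgab⟩ :=
        Finset.exists_ne_map_eq_of_card_lt_of_maps_to
          (t := (Finset.univ : Finset T)) (by simpa using hScard)
          (fun x _ => Finset.mem_univ (g x))
      rw [Set.Finite.mem_toFinset] at haS hbS
      have hagree : ∀ w ∈ Pos ∪ Neg, ∀ j < w.norm, (fpSat w a j ↔ fpSat w b j) := by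
        intro w hw j hj
        have := congrFun (congrFun hgab ⟨w, hw⟩) ⟨j, hj⟩
        simpa [g, decide_eq_decide] using this
      -- orient the pair so that the replaced formula is not a subformula of the kept one
      obtain ⟨x, y, hx, hy, hxy, hagr, hyx⟩ :
          ∃ x y : LTL P, x ∈ LTLSub φ ∧ y ∈ LTLSub φ ∧ x ≠ y ∧
            (∀ w ∈ Pos ∪ Neg, ∀ j < w.norm, (fpSat w x j ↔ fpSat w y j)) ∧ y ∉ LTLSub x := by
        by_cases hba : b ∈ LTLSub a
        · refine ⟨b, a, hbS, haS, hne.symm, fun w hw j hj => (hagree w hw j hj).symm, ?_⟩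
          intro hab
          rcases LTLts_of_mem hba with rfl | h1
          · exact hne rfl
          · rcases LTLts_of_mem hab with rfl | h2
            · exact hne rfl
            · omega
        · exact ⟨a, b, haS, hbS, hne, hagree, hba⟩
      have hsat : ∀ w ∈ Pos ∪ Neg, (w.sat (LTLrep x y φ) ↔ w.sat φ) :=
        fun w hw => sat_LTLrep w x y φ (hagr w hw)
      have hlt : LTLsz (LTLrep x y φ) < LTLsz φ := LTLsz_LTLrep_lt x y φ hx hy hxy hyx
      refine ih (LTLrep x y φ) (by omega) (Mem_LTLrep (Mem_of_sub hmem hx) hmem) ?_ ?_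
      · intro w hw
        exact (hsat w (Finset.mem_union_left _ hw)).mpr (hpos w hw)
      · intro w hw hs
        exact hneg w hw ((hsat w (Finset.mem_union_right _ hw)).mp hs)
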